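/- Identify ℝ³ with the pure imaginary quaternions. Let a₀,…,a_N be distinct pure imaginary quaternions, λ₀,…,λ_N > 0, μ > 0, and let ι̃ : ℝ³ ∖ {a₀,…,a_N} → ℝ³ be the map sending x to the imaginary part of Ψ(μ)(x)·conj(ζ(x)), regarded as a vector in ℝ³, where ζ(x) = Σᵢ λᵢ²(x − aᵢ)/‖x − aᵢ‖² and Ψ(μ)(x) = Σᵢ,ⱼ λᵢ²λⱼ² (x − aᵢ + μ)·conj(x − aⱼ + μ)·(x − aⱼ)/(‖x − aᵢ + μ‖²‖x − aⱼ + μ‖²‖x − aⱼ‖²). Suppose x* satisfies ζ(x*) = 0, and let Hf(x*) be the Hessian at x* of f(x) = Σᵢ λᵢ² log‖x − aᵢ‖ and Ξ(μ)(x) = Σᵢ,ⱼ μλᵢ²λⱼ²(aⱼ − aᵢ)·(x − aⱼ)/(‖x − aᵢ + μ‖²‖x − aⱼ + μ‖²‖x − aⱼ‖²). Then the determinant of the total derivative of ι̃ at x* equals −det(Hf(x*)) · Re(Ξ(μ)(x*)) · (Re(Ξ(μ)(x*))² + ‖Im(Ξ(μ)(x*))‖²). -/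

import Mathlib

/-- The pure imaginary quaternion corresponding to a vector in `ℝ³`. -/
def quatOfVec (y : Fin 3 → ℝ) : Quaternion ℝ := ⟨0, y 0, y 1, y 2⟩

/-- The vector in `ℝ³` formed by the imaginary part of a quaternion. -/
def imVec (q : Quaternion ℝ) : Fin 3 → ℝ := ![q.imI, q.imJ, q.imK]

/-- The JNR function `ζ(x) = Σᵢ λᵢ² (x − aᵢ)/‖x − aᵢ‖²`, quaternion-valued. -/
noncomputable def jnrZeta (N : ℕ) (a : Fin (N + 1) → Quaternion ℝ)
    (lam : Fin (N + 1) → ℝ) (x : Quaternion ℝ) : Quaternion ℝ :=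
  ∑ i, ((lam i) ^ 2 / ‖x - a i‖ ^ 2) • (x - a i)

/-- `ζ` as a map `ℝ³ → ℝ³` on pure imaginary quaternions. -/
noncomputable def jnrZetaVec (N : ℕ) (a : Fin (N + 1) → Quaternion ℝ)
    (lam : Fin (N + 1) → ℝ) (y : Fin 3 → ℝ) : Fin 3 → ℝ :=
  imVec (jnrZeta N a lam (quatOfVec y))

/-- `Ψ(μ)(x) = Σᵢⱼ λᵢ²λⱼ² (x − aᵢ + μ)·conj(x − aⱼ + μ)·(x − aⱼ)
/(‖x − aᵢ + μ‖²‖x − aⱼ + μ‖²‖x − aⱼ‖²)`, with quaternion products. -/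
noncomputable def jnrPsi (N : ℕ) (a : Fin (N + 1) → Quaternion ℝ)
    (lam : Fin (N + 1) → ℝ) (μ : ℝ) (x : Quaternion ℝ) : Quaternion ℝ :=
  ∑ i, ∑ j,
    ((lam i) ^ 2 * (lam j) ^ 2 /
        (‖x - a i + (μ : Quaternion ℝ)‖ ^ 2 * ‖x - a j + (μ : Quaternion ℝ)‖ ^ 2 *
          ‖x - a j‖ ^ 2)) •
      ((x - a i + (μ : Quaternion ℝ)) * star (x - a j + (μ : Quaternion ℝ)) * (x - a j))

/-- `Ξ(μ)(x) = Σᵢⱼ μλᵢ²λⱼ² (aⱼ − aᵢ)·(x − aⱼ)/(‖x − aᵢ + μ‖²‖x − aⱼ + μ‖²‖x − aⱼ‖²)`. -/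
noncomputable def jnrXi (N : ℕ) (a : Fin (N + 1) → Quaternion ℝ)
    (lam : Fin (N + 1) → ℝ) (μ : ℝ) (x : Quaternion ℝ) : Quaternion ℝ :=
  ∑ i, ∑ j,
    (μ * (lam i) ^ 2 * (lam j) ^ 2 /
        (‖x - a i + (μ : Quaternion ℝ)‖ ^ 2 * ‖x - a j + (μ : Quaternion ℝ)‖ ^ 2 *
          ‖x - a j‖ ^ 2)) •
      ((a j - a i) * (x - a j))

/-- `ι̃ : ℝ³ → ℝ³`, `x ↦ Im(Ψ(μ)(x)·conj(ζ(x)))` regarded as a vector in `ℝ³`. -/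
noncomputable def jnrIota (N : ℕ) (a : Fin (N + 1) → Quaternion ℝ)
    (lam : Fin (N + 1) → ℝ) (μ : ℝ) (y : Fin 3 → ℝ) : Fin 3 → ℝ :=
  imVec (jnrPsi N a lam μ (quatOfVec y) * star (jnrZeta N a lam (quatOfVec y)))

open Quaternion

/-! ### Auxiliary linear maps -/

noncomputable def quatOfVecL : (Fin 3 → ℝ) →L[ℝ] Quaternion ℝ :=
  LinearMap.toContinuousLinearMap
    { toFun := quatOfVec
      map_add' := fun y z => by apply Quaternion.ext <;> simp only [Quaternion.re_add, Quaternion.imI_add, Quaternion.imJ_add, Quaternion.imK_add] <;> simp [quatOfVec]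
      map_smul' := fun c y => by apply Quaternion.ext <;> simp only [Quaternion.re_smul, Quaternion.imI_smul, Quaternion.imJ_smul, Quaternion.imK_smul] <;> simp [quatOfVec] }

noncomputable def imVecL : Quaternion ℝ →L[ℝ] (Fin 3 → ℝ) :=
  LinearMap.toContinuousLinearMap
    { toFun := imVec
      map_add' := fun p q => by funext i; fin_cases i <;> simp [imVec]
      map_smul' := fun c q => by funext i; fin_cases i <;> simp [imVec] }

noncomputable def reL : Quaternion ℝ →L[ℝ] ℝ :=
  LinearMap.toContinuousLinearMap (QuaternionAlgebra.reₗ (R := ℝ) (-1) 0 (-1))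

@[simp] lemma quatOfVecL_apply (y : Fin 3 → ℝ) : quatOfVecL y = quatOfVec y := rfl
@[simp] lemma imVecL_apply (q : Quaternion ℝ) : imVecL q = imVec q := rfl
@[simp] lemma reL_apply (q : Quaternion ℝ) : reL q = q.re := rfl
@[simp] lemma quatOfVec_re (y : Fin 3 → ℝ) : (quatOfVec y).re = 0 := rfl

lemma quatOfVec_imVec {q : Quaternion ℝ} (h : q.re = 0) : quatOfVec (imVec q) = q := by
  apply Quaternion.ext <;> simp [quatOfVec, imVec, h]

lemma star_eq_neg_of_im {q : Quaternion ℝ} (h : q.re = 0) : star q = -q := by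
  apply Quaternion.ext <;> simp [h]

noncomputable def Lmap (q : Quaternion ℝ) : (Fin 3 → ℝ) →L[ℝ] (Fin 3 → ℝ) :=
  imVecL ∘L (ContinuousLinearMap.mul ℝ (Quaternion ℝ) q) ∘L (-quatOfVecL)

@[simp] lemma Lmap_apply (q : Quaternion ℝ) (v : Fin 3 → ℝ) :
    Lmap q v = imVec (q * -(quatOfVec v)) := rfl

lemma det_Lmap (q : Quaternion ℝ) :
    LinearMap.det ((Lmap q : (Fin 3 → ℝ) →L[ℝ] (Fin 3 → ℝ)) :
        (Fin 3 → ℝ) →ₗ[ℝ] (Fin 3 → ℝ))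
      = -(q.re * (q.re ^ 2 + (q.imI ^ 2 + q.imJ ^ 2 + q.imK ^ 2))) := by
  rw [← LinearMap.det_toMatrix']
  rw [Matrix.det_fin_three]
  simp [LinearMap.toMatrix'_apply, Lmap, imVec, ContinuousLinearMap.mul_apply',
    Quaternion.re_mul, Quaternion.imI_mul, Quaternion.imJ_mul, Quaternion.imK_mul]
  simp [quatOfVec]
  ring

lemma norm_im_sq (q : Quaternion ℝ) :
    ‖q.im‖ ^ 2 = q.imI ^ 2 + q.imJ ^ 2 + q.imK ^ 2 := by
  rw [sq, ← Quaternion.normSq_eq_norm_mul_self, Quaternion.normSq_def']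
  simp [QuaternionAlgebra.im]

/-! ### Re of zeta vanishes -/

lemma zeta_re_eq_zero {N : ℕ} (a : Fin (N + 1) → Quaternion ℝ) (ha_im : ∀ i, (a i).re = 0)
    (lam : Fin (N + 1) → ℝ) (y : Fin 3 → ℝ) :
    (jnrZeta N a lam (quatOfVec y)).re = 0 := by
  unfold jnrZeta
  rw [show ∀ (s : Finset (Fin (N+1))) (f : Fin (N+1) → Quaternion ℝ),
      (∑ i ∈ s, f i).re = ∑ i ∈ s, (f i).re from fun s f => map_sum (QuaternionAlgebra.reₗ (R := ℝ) (-1) 0 (-1)) f s]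
  apply Finset.sum_eq_zero
  intro i _
  simp [ha_im]

/-! ### Differentiability -/

lemma zeta_diff {N : ℕ} (a : Fin (N + 1) → Quaternion ℝ)
    (lam : Fin (N + 1) → ℝ) (xs : Fin 3 → ℝ) (hxs : ∀ i, quatOfVec xs ≠ a i) :
    DifferentiableAt ℝ (fun y => jnrZeta N a lam (quatOfVec y)) xs := by
  unfold jnrZeta
  apply DifferentiableAt.fun_sum
  intro i _
  have h1 : DifferentiableAt ℝ (fun y => quatOfVec y - a i) xs := by
    simpa using (quatOfVecL.differentiableAt (x := xs)).sub_const (a i)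
  have h2 : DifferentiableAt ℝ (fun y => ‖quatOfVec y - a i‖ ^ 2) xs := by
    have : ContDiffAt ℝ 1 (fun y => quatOfVec y - a i) xs :=
      (quatOfVecL.contDiff.sub contDiff_const).contDiffAt
    exact (this.norm_sq ℝ).differentiableAt one_ne_zero
  have hne : ‖quatOfVec xs - a i‖ ^ 2 ≠ 0 := by
    simpa [sub_eq_zero] using hxs i
  have h3 : DifferentiableAt ℝ (fun y => (lam i) ^ 2 / ‖quatOfVec y - a i‖ ^ 2) xs := by
    simpa [div_eq_mul_inv] using (h2.inv hne).const_mul ((lam i) ^ 2)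
  exact h3.smul h1

lemma psi_diff {N : ℕ} (a : Fin (N + 1) → Quaternion ℝ) (ha_im : ∀ i, (a i).re = 0)
    (lam : Fin (N + 1) → ℝ) (μ : ℝ) (hμ : 0 < μ)
    (xs : Fin 3 → ℝ) (hxs : ∀ i, quatOfVec xs ≠ a i) :
    DifferentiableAt ℝ (fun y => jnrPsi N a lam μ (quatOfVec y)) xs := by
  have hstar : ∀ (y : Fin 3 → ℝ) (j : Fin (N+1)),
      star (quatOfVec y - a j + (μ : Quaternion ℝ)) =
        (μ : Quaternion ℝ) - (quatOfVec y - a j) := by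
    intro y j
    apply Quaternion.ext <;> simp [ha_im] <;> ring
  have hsub : ∀ i, DifferentiableAt ℝ (fun y => quatOfVec y - a i) xs := fun i => by
    simpa using (quatOfVecL.differentiableAt (x := xs)).sub_const (a i)
  have hsubc : ∀ i, ContDiffAt ℝ 1 (fun y => quatOfVec y - a i) xs := fun i =>
    (quatOfVecL.contDiff.sub contDiff_const).contDiffAt
  have hB : ∀ i, DifferentiableAt ℝ (fun y => ‖quatOfVec y - a i‖ ^ 2) xs := fun i =>
    ((hsubc i).norm_sq ℝ).differentiableAt one_ne_zero
  have hA : ∀ i, DifferentiableAt ℝ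
      (fun y => ‖quatOfVec y - a i + (μ : Quaternion ℝ)‖ ^ 2) xs := fun i =>
    (((hsubc i).add contDiffAt_const).norm_sq ℝ).differentiableAt one_ne_zero
  have hBne : ∀ i, ‖quatOfVec xs - a i‖ ^ 2 ≠ 0 := fun i => by
    simpa [sub_eq_zero] using hxs i
  have hAne : ∀ i, ‖quatOfVec xs - a i + (μ : Quaternion ℝ)‖ ^ 2 ≠ 0 := by
    intro i
    have : (quatOfVec xs - a i + (μ : Quaternion ℝ)) ≠ 0 := by
      intro h
      have := congrArg QuaternionAlgebra.re h
      simp [ha_im] at this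
      exact hμ.ne' this
    have := norm_pos_iff.mpr this
    positivity
  unfold jnrPsi
  apply DifferentiableAt.fun_sum; intro i _
  apply DifferentiableAt.fun_sum; intro j _
  have hnum : DifferentiableAt ℝ (fun y =>
      (quatOfVec y - a i + (μ : Quaternion ℝ)) * star (quatOfVec y - a j + (μ : Quaternion ℝ))
        * (quatOfVec y - a j)) xs := by
    have : (fun y =>
        (quatOfVec y - a i + (μ : Quaternion ℝ)) * star (quatOfVec y - a j + (μ : Quaternion ℝ))
          * (quatOfVec y - a j)) = fun y =>
        (quatOfVec y - a i + (μ : Quaternion ℝ)) * ((μ : Quaternion ℝ) - (quatOfVec y - a j))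
          * (quatOfVec y - a j) := by
      funext y; rw [hstar]
    rw [this]
    exact (((hsub i).add_const _).mul ((differentiableAt_const _).sub (hsub j))).mul (hsub j)
  have hden : DifferentiableAt ℝ (fun y =>
      (lam i) ^ 2 * (lam j) ^ 2 /
        (‖quatOfVec y - a i + (μ : Quaternion ℝ)‖ ^ 2 * ‖quatOfVec y - a j + (μ : Quaternion ℝ)‖ ^ 2 *
          ‖quatOfVec y - a j‖ ^ 2)) xs := by
    have hd : DifferentiableAt ℝ (fun y =>
        ‖quatOfVec y - a i + (μ : Quaternion ℝ)‖ ^ 2 * ‖quatOfVec y - a j + (μ : Quaternion ℝ)‖ ^ 2 *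
          ‖quatOfVec y - a j‖ ^ 2) xs := ((hA i).mul (hA j)).mul (hB j)
    have hdne : (‖quatOfVec xs - a i + (μ : Quaternion ℝ)‖ ^ 2 *
        ‖quatOfVec xs - a j + (μ : Quaternion ℝ)‖ ^ 2 * ‖quatOfVec xs - a j‖ ^ 2) ≠ 0 :=
      mul_ne_zero (mul_ne_zero (hAne i) (hAne j)) (hBne j)
    simpa [div_eq_mul_inv] using (hd.inv hdne).const_mul ((lam i) ^ 2 * (lam j) ^ 2)
  exact hden.smul hnum

/-! ### Psi equals Xi at a zero of zeta -/

set_option maxHeartbeats 1000000 in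
lemma psi_eq_xi {N : ℕ} (a : Fin (N + 1) → Quaternion ℝ) (ha_im : ∀ i, (a i).re = 0)
    (lam : Fin (N + 1) → ℝ) (μ : ℝ) (hμ : 0 < μ) (x : Quaternion ℝ) (hx_re : x.re = 0)
    (hx : ∀ i, x ≠ a i) (hzero : jnrZeta N a lam x = 0) :
    jnrPsi N a lam μ x = jnrXi N a lam μ x := by
  have hB : ∀ i, ‖x - a i‖ ^ 2 ≠ 0 := fun i => by simpa [sub_eq_zero] using hx i
  have hA : ∀ i, ‖x - a i + (μ : Quaternion ℝ)‖ ^ 2 = ‖x - a i‖ ^ 2 + μ ^ 2 := by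
    intro i
    rw [sq, sq, ← Quaternion.normSq_eq_norm_mul_self, ← Quaternion.normSq_eq_norm_mul_self,
      Quaternion.normSq_def', Quaternion.normSq_def']
    simp [hx_re, ha_im]
    ring
  have hAne : ∀ i, ‖x - a i + (μ : Quaternion ℝ)‖ ^ 2 ≠ 0 := by
    intro i
    rw [hA i]
    have h1 : (0:ℝ) ≤ ‖x - a i‖ ^ 2 := by positivity
    nlinarith [hμ]
  have hBsq : ∀ j, ‖x - a j‖ ^ 2
      = (x - a j).imI ^ 2 + (x - a j).imJ ^ 2 + (x - a j).imK ^ 2 := by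
    intro j
    rw [sq, ← Quaternion.normSq_eq_norm_mul_self, Quaternion.normSq_def']
    simp [hx_re, ha_im]
  have key : ∀ i j, (x - a i + (μ : Quaternion ℝ)) * star (x - a j + (μ : Quaternion ℝ))
        * (x - a j)
      = (‖x - a j‖ ^ 2 + μ ^ 2) • (x - a j) + μ • ((a j - a i) * (x - a j))
        + (‖x - a j‖ ^ 2) • (a j - a i) := by
    intro i j
    rw [hBsq j]
    apply Quaternion.ext <;>
      simp [Quaternion.re_mul, Quaternion.imI_mul, Quaternion.imJ_mul, Quaternion.imK_mul,
        hx_re, ha_im] <;> ring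
  have expand : ∀ i j,
      ((lam i) ^ 2 * (lam j) ^ 2 /
          (‖x - a i + (μ : Quaternion ℝ)‖ ^ 2 * ‖x - a j + (μ : Quaternion ℝ)‖ ^ 2 *
            ‖x - a j‖ ^ 2)) •
        ((x - a i + (μ : Quaternion ℝ)) * star (x - a j + (μ : Quaternion ℝ)) * (x - a j))
      = ((lam i) ^ 2 / ‖x - a i + (μ : Quaternion ℝ)‖ ^ 2 *
            ((lam j) ^ 2 / ‖x - a j‖ ^ 2)) • (x - a j)
        + (μ * (lam i) ^ 2 * (lam j) ^ 2 /
            (‖x - a i + (μ : Quaternion ℝ)‖ ^ 2 * ‖x - a j + (μ : Quaternion ℝ)‖ ^ 2 *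
              ‖x - a j‖ ^ 2)) • ((a j - a i) * (x - a j))
        + ((lam i) ^ 2 / ‖x - a i + (μ : Quaternion ℝ)‖ ^ 2 *
            ((lam j) ^ 2 / ‖x - a j + (μ : Quaternion ℝ)‖ ^ 2)) • (a j - a i) := by
    intro i j
    rw [key i j, smul_add, smul_add, smul_smul, smul_smul, smul_smul]
    have e1 : (lam i) ^ 2 * (lam j) ^ 2 /
          (‖x - a i + (μ : Quaternion ℝ)‖ ^ 2 * ‖x - a j + (μ : Quaternion ℝ)‖ ^ 2 *
            ‖x - a j‖ ^ 2) * (‖x - a j‖ ^ 2 + μ ^ 2)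
        = (lam i) ^ 2 / ‖x - a i + (μ : Quaternion ℝ)‖ ^ 2 * ((lam j) ^ 2 / ‖x - a j‖ ^ 2) := by
      rw [← hA j, div_mul_eq_mul_div, div_mul_div_comm,
        div_eq_div_iff (mul_ne_zero (mul_ne_zero (hAne i) (hAne j)) (hB j))
          (mul_ne_zero (hAne i) (hB j))]
      ring
    have e2 : (lam i) ^ 2 * (lam j) ^ 2 /
          (‖x - a i + (μ : Quaternion ℝ)‖ ^ 2 * ‖x - a j + (μ : Quaternion ℝ)‖ ^ 2 *
            ‖x - a j‖ ^ 2) * μ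
        = μ * (lam i) ^ 2 * (lam j) ^ 2 /
            (‖x - a i + (μ : Quaternion ℝ)‖ ^ 2 * ‖x - a j + (μ : Quaternion ℝ)‖ ^ 2 *
              ‖x - a j‖ ^ 2) := by
      ring
    have e3 : (lam i) ^ 2 * (lam j) ^ 2 /
          (‖x - a i + (μ : Quaternion ℝ)‖ ^ 2 * ‖x - a j + (μ : Quaternion ℝ)‖ ^ 2 *
            ‖x - a j‖ ^ 2) * ‖x - a j‖ ^ 2
        = (lam i) ^ 2 / ‖x - a i + (μ : Quaternion ℝ)‖ ^ 2 *
            ((lam j) ^ 2 / ‖x - a j + (μ : Quaternion ℝ)‖ ^ 2) := by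
      rw [div_mul_eq_mul_div, div_mul_div_comm,
        div_eq_div_iff (mul_ne_zero (mul_ne_zero (hAne i) (hAne j)) (hB j))
          (mul_ne_zero (hAne i) (hAne j))]
      ring
    rw [e1, e2, e3]
  unfold jnrPsi jnrXi
  calc (∑ i, ∑ j, ((lam i) ^ 2 * (lam j) ^ 2 /
          (‖x - a i + (μ : Quaternion ℝ)‖ ^ 2 * ‖x - a j + (μ : Quaternion ℝ)‖ ^ 2 *
            ‖x - a j‖ ^ 2)) •
        ((x - a i + (μ : Quaternion ℝ)) * star (x - a j + (μ : Quaternion ℝ)) * (x - a j)))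
      = (∑ i, ∑ j, ((lam i) ^ 2 / ‖x - a i + (μ : Quaternion ℝ)‖ ^ 2 *
            ((lam j) ^ 2 / ‖x - a j‖ ^ 2)) • (x - a j))
        + (∑ i, ∑ j, (μ * (lam i) ^ 2 * (lam j) ^ 2 /
            (‖x - a i + (μ : Quaternion ℝ)‖ ^ 2 * ‖x - a j + (μ : Quaternion ℝ)‖ ^ 2 *
              ‖x - a j‖ ^ 2)) • ((a j - a i) * (x - a j)))
        + (∑ i, ∑ j, ((lam i) ^ 2 / ‖x - a i + (μ : Quaternion ℝ)‖ ^ 2 *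
            ((lam j) ^ 2 / ‖x - a j + (μ : Quaternion ℝ)‖ ^ 2)) • (a j - a i)) := by
        simp_rw [expand, Finset.sum_add_distrib]
    _ = (∑ i, ∑ j, (μ * (lam i) ^ 2 * (lam j) ^ 2 /
            (‖x - a i + (μ : Quaternion ℝ)‖ ^ 2 * ‖x - a j + (μ : Quaternion ℝ)‖ ^ 2 *
              ‖x - a j‖ ^ 2)) • ((a j - a i) * (x - a j))) := by
        have hsum1 : (∑ i, ∑ j, ((lam i) ^ 2 / ‖x - a i + (μ : Quaternion ℝ)‖ ^ 2 *
            ((lam j) ^ 2 / ‖x - a j‖ ^ 2)) • (x - a j)) = 0 := by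
          apply Finset.sum_eq_zero
          intro i _
          simp_rw [mul_smul, ← Finset.smul_sum]
          have : (∑ j, ((lam j) ^ 2 / ‖x - a j‖ ^ 2) • (x - a j)) = 0 := hzero
          rw [this, smul_zero]
        have hsum3 : (∑ i, ∑ j, ((lam i) ^ 2 / ‖x - a i + (μ : Quaternion ℝ)‖ ^ 2 *
            ((lam j) ^ 2 / ‖x - a j + (μ : Quaternion ℝ)‖ ^ 2)) • (a j - a i)) = 0 := by
          simp_rw [smul_sub, Finset.sum_sub_distrib]
          rw [sub_eq_zero, Finset.sum_comm]
          apply Finset.sum_congr rfl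
          intro i _
          apply Finset.sum_congr rfl
          intro j _
          rw [mul_comm]
        rw [hsum1, hsum3, zero_add, add_zero]

set_option maxHeartbeats 1000000 in
set_option synthInstance.maxHeartbeats 400000 in
/-- For distinct pure imaginary poles `aᵢ`, weights `λᵢ > 0`, `μ > 0`,
and a zero `x⁎` of `ζ` away from the poles, the determinant of the total derivative of
`ι̃` at `x⁎` equals `−det(Hf(x⁎))·Re(Ξ(μ)(x⁎))·(Re(Ξ(μ)(x⁎))² + ‖Im(Ξ(μ)(x⁎))‖²)`,
where the Hessian `Hf(x⁎)` of `f(x) = Σᵢ λᵢ² log‖x − aᵢ‖` is the derivative of `ζ`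
at `x⁎`. -/
theorem jnr_det_deriv_iota (N : ℕ)
    (a : Fin (N + 1) → Quaternion ℝ) (ha_im : ∀ i, (a i).re = 0)
    (ha : Function.Injective a)
    (lam : Fin (N + 1) → ℝ) (hlam : ∀ i, 0 < lam i)
    (μ : ℝ) (hμ : 0 < μ)
    (xs : Fin 3 → ℝ) (hxs : ∀ i, quatOfVec xs ≠ a i)
    (hzero : jnrZeta N a lam (quatOfVec xs) = 0) :
    LinearMap.det
        ((fderiv ℝ (jnrIota N a lam μ) xs : (Fin 3 → ℝ) →L[ℝ] (Fin 3 → ℝ)) :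
          (Fin 3 → ℝ) →ₗ[ℝ] (Fin 3 → ℝ))
      = -LinearMap.det
            ((fderiv ℝ (jnrZetaVec N a lam) xs : (Fin 3 → ℝ) →L[ℝ] (Fin 3 → ℝ)) :
              (Fin 3 → ℝ) →ₗ[ℝ] (Fin 3 → ℝ)) *
          ((jnrXi N a lam μ (quatOfVec xs)).re *
            ((jnrXi N a lam μ (quatOfVec xs)).re ^ 2 +
              ‖(jnrXi N a lam μ (quatOfVec xs)).im‖ ^ 2)) := by
  have hzre : ∀ y, (jnrZeta N a lam (quatOfVec y)).re = 0 := zeta_re_eq_zero a ha_im lam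
  set Z : (Fin 3 → ℝ) → Quaternion ℝ := fun y => jnrZeta N a lam (quatOfVec y) with hZdef
  set P : (Fin 3 → ℝ) → Quaternion ℝ := fun y => jnrPsi N a lam μ (quatOfVec y) with hPdef
  have hZ : DifferentiableAt ℝ Z xs := zeta_diff a lam xs hxs
  have hP : DifferentiableAt ℝ P xs := psi_diff a ha_im lam μ hμ xs hxs
  set Z' := fderiv ℝ Z xs with hZ'
  have hZd : HasFDerivAt Z Z' xs := hZ.hasFDerivAt
  have h0 : Z xs = 0 := hzero
  have hiota : jnrIota N a lam μ = fun y => imVecL (P y * -(Z y)) := by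
    funext y
    simp only [jnrIota, imVecL_apply]
    rw [star_eq_neg_of_im (hzre y)]
  have hmul : HasFDerivAt (fun y => P y * -(Z y)) (P xs • (-Z')) xs := by
    have h1 := hP.hasFDerivAt.mul' hZd.neg
    have h2 : MulOpposite.op ((-Z) xs) • fderiv ℝ P xs = 0 := by
      rw [Pi.neg_apply, h0, neg_zero, MulOpposite.op_zero]
      ext v <;> simp
    rw [h2, add_zero] at h1
    exact h1
  have hiotd : HasFDerivAt (jnrIota N a lam μ) (imVecL ∘L (P xs • (-Z'))) xs := by
    rw [hiota]
    exact imVecL.hasFDerivAt.comp xs hmul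
  have hzvd : HasFDerivAt (jnrZetaVec N a lam) (imVecL ∘L Z') xs :=
    imVecL.hasFDerivAt.comp xs hZd
  have hZ're : ∀ v, (Z' v).re = 0 := by
    intro v
    have h2 : HasFDerivAt (fun y => reL (Z y)) (reL ∘L Z') xs := reL.hasFDerivAt.comp xs hZd
    have h1 : (fun y => reL (Z y)) = fun _ => (0:ℝ) := funext fun y => by
      simp [hZdef, hzre y]
    rw [h1] at h2
    have h3 : reL ∘L Z' = 0 := h2.unique (hasFDerivAt_const 0 xs)
    have := congrArg (fun (f : (Fin 3 → ℝ) →L[ℝ] ℝ) => f v) h3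
    simpa using this
  have hcomp : imVecL ∘L (P xs • (-Z')) = (Lmap (P xs)) ∘L (imVecL ∘L Z') := by
    ext v
    simp only [ContinuousLinearMap.comp_apply, ContinuousLinearMap.smul_apply,
      ContinuousLinearMap.neg_apply, imVecL_apply, Lmap_apply]
    rw [quatOfVec_imVec (hZ're v), smul_eq_mul]
  rw [hiotd.fderiv, hzvd.fderiv, hcomp, ContinuousLinearMap.toLinearMap_comp, LinearMap.det_comp,
    det_Lmap]
  have hq : P xs = jnrXi N a lam μ (quatOfVec xs) :=
    psi_eq_xi a ha_im lam μ hμ (quatOfVec xs) (quatOfVec_re xs) hxs hzero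
  rw [hq, norm_im_sq]
  ring
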